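/- Let d be a positive odd integer and let M be the d × d tridiagonal matrix over ℤ[x,y,z] with (i,j)-entry (2i-(d+1))z when i=j, i·x when j=i+1, -((d+1)-i)y when j=i-1, and 0 otherwise. Then det M = 0. -/
import Mathlib

open Finset MvPolynomial

noncomputable def Lmat (R : Type*) [CommRing R] (d n : ℕ) :
    Matrix (Fin n) (Fin n) (MvPolynomial (Fin 3) R) :=
  Matrix.of fun i j =>
    if (i : ℕ) = (j : ℕ) then
      C ((2 * ((i : ℕ) : ℤ) + 2 - ((d : ℤ) + 1) : ℤ) : R) * X 2
    else if (j : ℕ) = (i : ℕ) + 1 then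
      C ((((i : ℕ) : ℤ) + 1 : ℤ) : R) * X 0
    else if (i : ℕ) = (j : ℕ) + 1 then
      C ((-(((d : ℤ) + 1) - (((i : ℕ) : ℤ) + 1)) : ℤ) : R) * X 1
    else 0

noncomputable abbrev swapXY : MvPolynomial (Fin 3) ℤ →+* MvPolynomial (Fin 3) ℤ :=
  (rename (Equiv.swap (0 : Fin 3) 1)).toRingHom

lemma swap00 : (Equiv.swap (0 : Fin 3) 1) 0 = 1 := by decide
lemma swap01 : (Equiv.swap (0 : Fin 3) 1) 1 = 0 := by decide
lemma swap02 : (Equiv.swap (0 : Fin 3) 1) 2 = 2 := by decide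

lemma neg_C_mul {a b : ℤ} (h : a = -b) (k l : Fin 3) (hkl : k = l) :
    (C a : MvPolynomial (Fin 3) ℤ) * X k = -(C b * X l) := by
  rw [h, hkl, map_neg, neg_mul]

lemma refl_eq (d : ℕ) :
    (Lmat ℤ d d).submatrix Fin.rev Fin.rev = -((Lmat ℤ d d).map ⇑swapXY) := by
  funext i j
  have hi := i.isLt
  have hj := j.isLt
  simp only [Lmat, swapXY, Matrix.submatrix_apply, Matrix.map_apply, Matrix.neg_apply,
    Matrix.of_apply, Fin.val_rev, Int.cast_id, AlgHom.toRingHom_eq_coe, RingHom.coe_coe]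
  split_ifs <;>
    first
      | omega
      | (simp only [map_mul, rename_C, rename_X, swap00, swap01, swap02];
         exact neg_C_mul (by omega) _ _ rfl)
      | simp

lemma det_map_swap (d : ℕ) :
    ((Lmat ℤ d d).map ⇑swapXY).det = (Lmat ℤ d d).det := by
  classical
  set D : Matrix (Fin d) (Fin d) (MvPolynomial (Fin 3) ℤ) :=
    Matrix.diagonal (fun i => X 0 ^ (i : ℕ) * X 1 ^ (d - (i : ℕ))) with hD
  have hDdet : D.det ≠ 0 := by
    rw [hD, Matrix.det_diagonal]
    exact Finset.prod_ne_zero_iff.mpr fun i _ =>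
      mul_ne_zero (pow_ne_zero _ (X_ne_zero 0)) (pow_ne_zero _ (X_ne_zero 1))
  have key : D * Lmat ℤ d d = (Lmat ℤ d d).map ⇑swapXY * D := by
    funext i j
    have hi := i.isLt
    have hj := j.isLt
    rw [hD, Matrix.diagonal_mul, Matrix.mul_diagonal]
    simp only [Lmat, swapXY, Matrix.map_apply, Matrix.of_apply, Int.cast_id,
      AlgHom.toRingHom_eq_coe, RingHom.coe_coe]
    split_ifs with h1 h2 h3
    · simp only [map_mul, rename_C, rename_X, swap02]
      rw [h1]; ring
    · simp only [map_mul, rename_C, rename_X, swap00]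
      rw [h2, (by omega : d - (i : ℕ) = (d - ((i : ℕ) + 1)) + 1), pow_succ]
      ring
    · simp only [map_mul, rename_C, rename_X, swap01]
      rw [h3, (by omega : d - (j : ℕ) = (d - ((j : ℕ) + 1)) + 1), pow_succ]
      ring
    · simp
  have hdet := congrArg Matrix.det key
  rw [Matrix.det_mul, Matrix.det_mul] at hdet
  exact mul_left_cancel₀ hDdet (by linear_combination -hdet)

theorem det_Lmat_odd (d : ℕ) (hd : 0 < d) (hodd : Odd d) :
    (Lmat ℤ d d).det = 0 := by
  have h2 : (Lmat ℤ d d).det = -((Lmat ℤ d d).map ⇑swapXY).det := by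
    conv_lhs => rw [← Matrix.det_submatrix_equiv_self Fin.revPerm (Lmat ℤ d d)]
    have hsub : (Lmat ℤ d d).submatrix ⇑(Fin.revPerm (n := d)) ⇑(Fin.revPerm (n := d))
        = (Lmat ℤ d d).submatrix Fin.rev Fin.rev := rfl
    rw [hsub, refl_eq, Matrix.det_neg, Fintype.card_fin, hodd.neg_one_pow, neg_one_mul]
  rw [det_map_swap] at h2
  have h3 : (2 : MvPolynomial (Fin 3) ℤ) * (Lmat ℤ d d).det = 0 := by linear_combination h2
  exact (mul_eq_zero.mp h3).resolve_left two_ne_zero
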